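/- Let k ≥ 2 be an integer and let 0 < μ < 1/2. Let k_odd be the largest odd integer ≤ k and k_even the largest even integer ≤ k. The map sending a probability distribution ν on {0,1}^k to ν({(0,0,…,0)}), restricted to the set of probability distributions on {0,1}^k that are (k−1)-wise independent with Bernoulli(μ) marginals, is injective, and its image is exactly the closed interval [(1−μ)^k · (1 − (μ/(1−μ))^{k_even}), (1−μ)^k · (1 + (μ/(1−μ))^{k_odd})]. In particular, for every v in this interval there is exactly one (k−1)-wise independent probability distribution on {0,1}^k with Bernoulli(μ) marginals assigning probability v to the all-zeros outcome. -/

import Mathlib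

open MeasureTheory

/-- A probability distribution `ν` on `{0,1}^k` is `(k−1)`-wise independent with
`Bernoulli(μ)` marginals if for every subset `T` of size `k−1` and every assignment `t` of
values on `T`, the `ν`-probability of the event `{∀ i ∈ T, X_i = t_i}` equals
`∏_{i∈T} μ^{t_i} (1−μ)^{1−t_i}`. -/
def KWiseIndepBernoulli (k : ℕ) (μ : ℝ) (ν : Measure (Fin k → Bool)) : Prop :=
  ∀ T : Finset (Fin k), T.card = k - 1 → ∀ t : Fin k → Bool,
    (ν {x | ∀ i ∈ T, x i = t i}).toReal = ∏ i ∈ T, (if t i then μ else 1 - μ)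

namespace Stmt2Aux

open Finset

variable {k : ℕ}

/-- number of `true` coordinates -/
def cnt (x : Fin k → Bool) : ℕ := (Finset.univ.filter (fun i => x i = true)).card

noncomputable def pf (μ : ℝ) (x : Fin k → Bool) : ℝ := ∏ i, (if x i then μ else 1 - μ)

noncomputable def sf (x : Fin k → Bool) : ℝ := ∏ i, (if x i then (-1:ℝ) else 1)

lemma cnt_le (x : Fin k → Bool) : cnt x ≤ k := by
  simpa [cnt] using Finset.card_filter_le Finset.univ (fun i => x i = true)

lemma pf_eq (μ : ℝ) (x : Fin k → Bool) :
    pf μ x = μ ^ cnt x * (1 - μ) ^ (k - cnt x) := by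
  rw [pf, Finset.prod_ite, Finset.prod_const, Finset.prod_const, cnt]
  congr 1
  rw [Finset.filter_not, Finset.card_sdiff_of_subset (Finset.filter_subset _ _),
    Finset.card_univ, Fintype.card_fin]

lemma sf_eq (x : Fin k → Bool) : sf x = (-1 : ℝ) ^ cnt x := by
  rw [sf, Finset.prod_ite, Finset.prod_const, Finset.prod_const, cnt, one_pow, mul_one]

lemma prod_update (f : Bool → ℝ) (x : Fin k → Bool) (j : Fin k) (b : Bool) :
    ∏ i, f (Function.update x j b i) =
      f b * ∏ i ∈ Finset.univ.erase j, f (x i) := by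
  rw [← Finset.mul_prod_erase Finset.univ _ (Finset.mem_univ j)]
  rw [Function.update_self]
  congr 1
  refine Finset.prod_congr rfl fun i hi => ?_
  rw [Function.update_of_ne (Finset.ne_of_mem_erase hi)]

lemma pf_update (μ : ℝ) (x : Fin k → Bool) (j : Fin k) (b : Bool) :
    pf μ (Function.update x j b) =
      (if b then μ else 1 - μ) * ∏ i ∈ Finset.univ.erase j, (if x i then μ else 1 - μ) :=
  prod_update (fun b => if b then μ else 1 - μ) x j b

lemma sf_update (x : Fin k → Bool) (j : Fin k) (b : Bool) :
    sf (Function.update x j b) =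
      (if b then (-1:ℝ) else 1) * ∏ i ∈ Finset.univ.erase j, (if x i then (-1:ℝ) else 1) :=
  prod_update (fun b => if b then (-1:ℝ) else 1) x j b

lemma event_pair (j : Fin k) (t : Fin k → Bool) :
    {x : Fin k → Bool | ∀ i ∈ Finset.univ.erase j, x i = t i}
      = {Function.update t j false, Function.update t j true} := by
  ext x
  simp only [Set.mem_setOf_eq, Set.mem_insert_iff, Set.mem_singleton_iff]
  constructor
  · intro h
    have hx : x = Function.update t j (x j) := by
      funext i
      by_cases hi : i = j
      · subst hi; simp
      · rw [Function.update_of_ne hi]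
        exact h i (Finset.mem_erase.2 ⟨hi, Finset.mem_univ i⟩)
    cases hb : x j
    · left; rw [hx, hb]
    · right; rw [hx, hb]
  · rintro (rfl | rfl) <;>
    · intro i hi
      rw [Function.update_of_ne (Finset.ne_of_mem_erase hi)]

lemma update_ne (t : Fin k → Bool) (j : Fin k) :
    Function.update t j false ≠ Function.update t j true := by
  intro h
  have := congrFun h j
  simp at this

lemma constraint {μ : ℝ} {ν : Measure (Fin k → Bool)} [IsProbabilityMeasure ν]
    (hν : KWiseIndepBernoulli k μ ν) (j : Fin k) (t : Fin k → Bool) :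
    (ν {Function.update t j false}).toReal + (ν {Function.update t j true}).toReal
      = ∏ i ∈ Finset.univ.erase j, (if t i then μ else 1 - μ) := by
  have hT : (Finset.univ.erase j).card = k - 1 := by
    rw [Finset.card_erase_of_mem (Finset.mem_univ j), Finset.card_univ, Fintype.card_fin]
  have h := hν _ hT t
  rw [event_pair] at h
  rw [← h]
  have hdisj : Disjoint ({Function.update t j false} : Set (Fin k → Bool))
      {Function.update t j true} := by
    simp [Set.disjoint_singleton, update_ne t j]
  rw [Set.insert_eq, measure_union hdisj ((Set.to_countable _).measurableSet),
    ENNReal.toReal_add (measure_ne_top ν _) (measure_ne_top ν _)]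

/-- core induction: the point masses are determined by the value at all-zeros. -/
lemma point_formula {μ : ℝ} {ν : Measure (Fin k → Bool)} [IsProbabilityMeasure ν]
    (hν : KWiseIndepBernoulli k μ ν) (x : Fin k → Bool) :
    (ν {x}).toReal
      = pf μ x + sf x * ((ν {fun _ => false}).toReal - pf μ (fun _ : Fin k => false)) := by
  suffices H : ∀ (n : ℕ) (y : Fin k → Bool), cnt y = n →
      (ν {y}).toReal
        = pf μ y + sf y * ((ν {fun _ => false}).toReal - pf μ (fun _ : Fin k => false)) from
    H _ x rfl
  intro n
  induction n using Nat.strong_induction_on with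
  | _ n ih =>
    intro y hy
    by_cases h0 : y = fun _ => false
    · subst h0
      have hs : sf (fun _ : Fin k => false) = 1 := by simp [sf]
      simp only [hs]; ring
    · have hj : ∃ j, y j = true := by
        by_contra hc
        push_neg at hc
        exact h0 (funext fun i => by simpa using hc i)
      obtain ⟨j, hj⟩ := hj
      have hmem : j ∈ Finset.univ.filter (fun i => y i = true) := by
        simp [hj]
      have hfil : Finset.univ.filter (fun i => Function.update y j false i = true)
          = (Finset.univ.filter (fun i => y i = true)).erase j := by
        ext i
        by_cases hi : i = j <;> simp [Function.update_apply, hi]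
      have hcnt : cnt (Function.update y j false) < n := by
        rw [← hy]
        unfold cnt
        rw [hfil]
        exact Finset.card_erase_lt_of_mem hmem
      have hyy : Function.update y j true = y := by
        rw [← hj]; exact Function.update_eq_self j y
      have hc := constraint hν j y
      rw [hyy] at hc
      have ihy := ih _ hcnt (Function.update y j false) rfl
      have hpf' : pf μ (Function.update y j false)
          = (1 - μ) * ∏ i ∈ Finset.univ.erase j, (if y i then μ else 1 - μ) := by
        simpa using pf_update μ y j false
      have hpf : pf μ y = μ * ∏ i ∈ Finset.univ.erase j, (if y i then μ else 1 - μ) := by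
        conv_lhs => rw [← hyy]
        simpa using pf_update μ y j true
      have hsf' : sf (Function.update y j false)
          = ∏ i ∈ Finset.univ.erase j, (if y i then (-1:ℝ) else 1) := by
        simpa using sf_update y j false
      have hsf : sf y = -∏ i ∈ Finset.univ.erase j, (if y i then (-1:ℝ) else 1) := by
        conv_lhs => rw [← hyy]
        simpa using sf_update y j true
      rw [hpf', hsf'] at ihy
      rw [hpf, hsf]
      linarith [hc, ihy]

lemma pf_false (μ : ℝ) : pf μ (fun _ : Fin k => false) = (1 - μ) ^ k := by
  simp [pf, Finset.prod_const]

lemma cnt_false : cnt (fun _ : Fin k => false) = 0 := by simp [cnt]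

/-- the standard witness with exactly `m` trues -/
def wit (k m : ℕ) : Fin k → Bool := fun i => decide ((i : ℕ) < m)

lemma cnt_wit {m : ℕ} (h : m ≤ k) : cnt (wit k m) = m := by
  have hcard : (Finset.univ.filter (fun i : Fin k => (i : ℕ) < m)).card = m := by
    rw [← Fintype.card_subtype]
    have e : {i : Fin k // (i : ℕ) < m} ≃ Fin m :=
      { toFun := fun i => ⟨i.1, i.2⟩
        invFun := fun j => ⟨⟨j, lt_of_lt_of_le j.2 h⟩, j.2⟩
        left_inv := fun i => rfl
        right_inv := fun j => rfl }
    rw [Fintype.card_congr e, Fintype.card_fin]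
  have hset : Finset.univ.filter (fun i => wit k m i = true)
      = Finset.univ.filter (fun i : Fin k => (i : ℕ) < m) := by
    ext i; simp [wit]
  rw [cnt, hset, hcard]

lemma pf_eq' {μ : ℝ} (hμ : μ < 1) (x : Fin k → Bool) :
    pf μ x = (1 - μ) ^ k * (μ / (1 - μ)) ^ cnt x := by
  have h1 : (1 : ℝ) - μ ≠ 0 := by intro h; linarith [h]
  have h2 : (1 - μ) ^ (k - cnt x) * (1 - μ) ^ (cnt x) = (1 - μ) ^ k :=
    pow_sub_mul_pow (1 - μ) (cnt_le x)
  have h3 : (1 - μ) ^ cnt x ≠ 0 := pow_ne_zero _ h1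
  rw [pf_eq, div_pow, ← h2]
  field_simp

noncomputable def nu (k : ℕ) (μ ε : ℝ) : Measure (Fin k → Bool) :=
  ∑ x : Fin k → Bool, (ENNReal.ofReal (pf μ x + sf x * ε)) • Measure.dirac x

lemma nu_apply (μ ε : ℝ) (F : Finset (Fin k → Bool)) :
    nu k μ ε ↑F = ∑ x ∈ F, ENNReal.ofReal (pf μ x + sf x * ε) := by
  rw [nu, Measure.finset_sum_apply]
  have hF : MeasurableSet (↑F : Set (Fin k → Bool)) :=
    Set.Countable.measurableSet (Set.to_countable _)
  have h : ∀ x : Fin k → Bool,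
      (ENNReal.ofReal (pf μ x + sf x * ε) • Measure.dirac x) (↑F)
        = if x ∈ F then ENNReal.ofReal (pf μ x + sf x * ε) else 0 := by
    intro x
    rw [Measure.smul_apply, Measure.dirac_apply' _ hF]
    by_cases hx : x ∈ F <;> simp [Set.indicator_apply, hx]
  rw [Finset.sum_congr rfl fun x _ => h x, Finset.sum_ite_mem, Finset.univ_inter]

lemma sum_prod (f : Bool → ℝ) :
    ∑ x : Fin k → Bool, ∏ i, f (x i) = (f false + f true) ^ k := by
  rw [← Fintype.piFinset_univ, ← Finset.prod_univ_sum]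
  simp only [Finset.prod_const, Finset.card_univ, Fintype.card_fin]
  rw [show ∑ b : Bool, f b = f false + f true by simp [Fintype.sum_bool, add_comm]]

lemma sum_pf (μ : ℝ) : ∑ x : Fin k → Bool, pf μ x = 1 := by
  have h := sum_prod (k := k) (fun b => if b then μ else 1 - μ)
  simp only [if_true, if_false, Bool.false_eq_true] at h
  simp only [pf]
  rw [h, show (1:ℝ) - μ + μ = 1 by ring, one_pow]

lemma sum_sf (hk : 1 ≤ k) : ∑ x : Fin k → Bool, sf x = 0 := by
  have h := sum_prod (k := k) (fun b => if b then (-1:ℝ) else 1)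
  simp only [if_true, if_false, Bool.false_eq_true] at h
  simp only [sf]
  rw [h, show (1:ℝ) + -1 = 0 by ring, zero_pow (by omega)]

lemma w_nonneg {μ ε : ℝ} (hμ0 : 0 < μ) (hμ : μ < 1/2)
    (kodd keven : ℕ)
    (hkoddmax : ∀ m, Odd m → m ≤ k → m ≤ kodd)
    (hkevenmax : ∀ m, Even m → m ≤ k → m ≤ keven)
    (hεlo : -((1-μ)^k * (μ/(1-μ))^keven) ≤ ε)
    (hεhi : ε ≤ (1-μ)^k * (μ/(1-μ))^kodd)
    (x : Fin k → Bool) : 0 ≤ pf μ x + sf x * ε := by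
  have hμ1 : μ < 1 := by linarith
  have h1 : (0:ℝ) < 1 - μ := by linarith
  have hr0 : 0 ≤ μ / (1-μ) := by positivity
  have hr1 : μ / (1-μ) ≤ 1 := by
    rw [div_le_one h1]; linarith
  have hk0 : (0:ℝ) < (1-μ)^k := by positivity
  rw [pf_eq' hμ1, sf_eq]
  rcases Nat.even_or_odd (cnt x) with he | ho
  · rw [he.neg_one_pow, one_mul]
    have hle : (μ/(1-μ))^keven ≤ (μ/(1-μ))^(cnt x) :=
      pow_le_pow_of_le_one hr0 hr1 (hkevenmax _ he (cnt_le x))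
    nlinarith [mul_le_mul_of_nonneg_left hle (le_of_lt hk0)]
  · rw [ho.neg_one_pow, neg_one_mul]
    have hle : (μ/(1-μ))^kodd ≤ (μ/(1-μ))^(cnt x) :=
      pow_le_pow_of_le_one hr0 hr1 (hkoddmax _ ho (cnt_le x))
    nlinarith [mul_le_mul_of_nonneg_left hle (le_of_lt hk0)]

lemma nu_prob {μ ε : ℝ} (hk : 1 ≤ k)
    (hnn : ∀ x : Fin k → Bool, 0 ≤ pf μ x + sf x * ε) :
    IsProbabilityMeasure (nu k μ ε) := by
  constructor
  rw [← Finset.coe_univ, nu_apply, ← ENNReal.ofReal_sum_of_nonneg (fun x _ => hnn x),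
    Finset.sum_add_distrib, ← Finset.sum_mul, sum_pf, sum_sf hk]
  norm_num

lemma nu_singleton {μ ε : ℝ} (hnn : ∀ x : Fin k → Bool, 0 ≤ pf μ x + sf x * ε)
    (y : Fin k → Bool) :
    ((nu k μ ε) {y}).toReal = pf μ y + sf y * ε := by
  rw [← Finset.coe_singleton, nu_apply, Finset.sum_singleton, ENNReal.toReal_ofReal (hnn y)]

lemma nu_indep {μ ε : ℝ} (hk : 2 ≤ k)
    (hnn : ∀ x : Fin k → Bool, 0 ≤ pf μ x + sf x * ε) :
    KWiseIndepBernoulli k μ (nu k μ ε) := by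
  intro T hT t
  have hTne : T ≠ Finset.univ := by
    intro h; rw [h, Finset.card_univ, Fintype.card_fin] at hT; omega
  obtain ⟨j, hj⟩ : ∃ j, j ∉ T := by
    by_contra hc; push_neg at hc
    exact hTne (Finset.eq_univ_iff_forall.2 hc)
  have hTe : T = Finset.univ.erase j := by
    apply Finset.eq_of_subset_of_card_le
    · intro i hi
      exact Finset.mem_erase.2 ⟨fun h => hj (h ▸ hi), Finset.mem_univ i⟩
    · rw [Finset.card_erase_of_mem (Finset.mem_univ j), Finset.card_univ,
        Fintype.card_fin, hT]
  subst hTe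
  rw [event_pair]
  have hne := update_ne t j
  have hpair : ({Function.update t j false, Function.update t j true} : Set (Fin k → Bool))
      = ↑({Function.update t j false, Function.update t j true} : Finset (Fin k → Bool)) := by
    simp
  rw [hpair, nu_apply, Finset.sum_pair hne,
    ← ENNReal.ofReal_add (hnn _) (hnn _),
    ENNReal.toReal_ofReal (add_nonneg (hnn _) (hnn _))]
  have h1 := pf_update μ t j false
  have h2 := pf_update μ t j true
  have h3 := sf_update t j false
  have h4 := sf_update t j true
  simp only [if_true, if_false, Bool.false_eq_true] at h1 h2 h3 h4
  rw [h1, h2, h3, h4]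
  ring

end Stmt2Aux

open Stmt2Aux in
/-- For `k ≥ 2` and `0 < μ < 1/2`, the map `ν ↦ ν({all-zeros})`, restricted to
`(k−1)`-wise independent probability distributions on `{0,1}^k` with `Bernoulli(μ)` marginals,
is injective with image exactly
`[(1−μ)^k (1 − (μ/(1−μ))^{k_even}), (1−μ)^k (1 + (μ/(1−μ))^{k_odd})]`; in particular every `v`
in this interval is hit by exactly one such distribution. -/
theorem stmt_2
    (k : ℕ) (hk : 2 ≤ k) (μ : ℝ) (hμ0 : 0 < μ) (hμ : μ < 1 / 2)
    (kodd keven : ℕ)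
    (hkodd : Odd kodd) (hkoddle : kodd ≤ k) (hkoddmax : ∀ m, Odd m → m ≤ k → m ≤ kodd)
    (hkeven : Even keven) (hkevenle : keven ≤ k)
    (hkevenmax : ∀ m, Even m → m ≤ k → m ≤ keven) :
    Set.InjOn (fun ν : Measure (Fin k → Bool) => (ν {fun _ => false}).toReal)
        {ν | IsProbabilityMeasure ν ∧ KWiseIndepBernoulli k μ ν} ∧
      (fun ν : Measure (Fin k → Bool) => (ν {fun _ => false}).toReal) ''
          {ν | IsProbabilityMeasure ν ∧ KWiseIndepBernoulli k μ ν}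
        = Set.Icc ((1 - μ) ^ k * (1 - (μ / (1 - μ)) ^ keven))
            ((1 - μ) ^ k * (1 + (μ / (1 - μ)) ^ kodd)) ∧
      ∀ v ∈ Set.Icc ((1 - μ) ^ k * (1 - (μ / (1 - μ)) ^ keven))
          ((1 - μ) ^ k * (1 + (μ / (1 - μ)) ^ kodd)),
        ∃! ν : Measure (Fin k → Bool),
          (IsProbabilityMeasure ν ∧ KWiseIndepBernoulli k μ ν) ∧
            (ν {fun _ => false}).toReal = v := by
  have hμ1 : μ < 1 := by linarith
  have hsf0 : sf (fun _ : Fin k => false) = 1 := by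
    rw [sf_eq, cnt_false, pow_zero]
  -- injectivity
  have hinj : Set.InjOn (fun ν : Measure (Fin k → Bool) => (ν {fun _ => false}).toReal)
      {ν | IsProbabilityMeasure ν ∧ KWiseIndepBernoulli k μ ν} := by
    rintro ν₁ ⟨hp₁, hi₁⟩ ν₂ ⟨hp₂, hi₂⟩ hv
    haveI := hp₁; haveI := hp₂
    simp only at hv
    apply MeasureTheory.Measure.ext_of_singleton
    intro x
    have e₁ := point_formula hi₁ x
    have e₂ := point_formula hi₂ x
    rw [hv] at e₁
    exact (ENNReal.toReal_eq_toReal_iff' (measure_ne_top ν₁ _) (measure_ne_top ν₂ _)).1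
      (e₁.trans e₂.symm)
  -- membership implies value in Icc
  have hsub : ∀ ν : Measure (Fin k → Bool),
      IsProbabilityMeasure ν → KWiseIndepBernoulli k μ ν →
      (ν {fun _ => false}).toReal ∈ Set.Icc
        ((1 - μ) ^ k * (1 - (μ / (1 - μ)) ^ keven))
        ((1 - μ) ^ k * (1 + (μ / (1 - μ)) ^ kodd)) := by
    intro ν hp hind
    haveI := hp
    set v := (ν {fun _ : Fin k => false}).toReal with hvdef
    have hhi : v ≤ (1 - μ) ^ k * (1 + (μ / (1 - μ)) ^ kodd) := by
      have e := point_formula hind (wit k kodd)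
      rw [pf_eq' hμ1, sf_eq, cnt_wit hkoddle, hkodd.neg_one_pow, pf_false] at e
      have h0 : (0:ℝ) ≤ (ν {wit k kodd}).toReal := ENNReal.toReal_nonneg
      rw [e] at h0
      nlinarith [h0]
    have hlo : (1 - μ) ^ k * (1 - (μ / (1 - μ)) ^ keven) ≤ v := by
      have e := point_formula hind (wit k keven)
      rw [pf_eq' hμ1, sf_eq, cnt_wit hkevenle, hkeven.neg_one_pow, pf_false] at e
      have h0 : (0:ℝ) ≤ (ν {wit k keven}).toReal := ENNReal.toReal_nonneg
      rw [e] at h0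
      nlinarith [h0]
    exact ⟨hlo, hhi⟩
  -- construction for each v in the interval
  have hexists : ∀ v ∈ Set.Icc ((1 - μ) ^ k * (1 - (μ / (1 - μ)) ^ keven))
      ((1 - μ) ^ k * (1 + (μ / (1 - μ)) ^ kodd)),
      ∃ ν : Measure (Fin k → Bool),
        (IsProbabilityMeasure ν ∧ KWiseIndepBernoulli k μ ν) ∧
          (ν {fun _ => false}).toReal = v := by
    rintro v ⟨hvlo, hvhi⟩
    set ε := v - (1 - μ) ^ k with hεdef
    have hεlo : -((1-μ)^k * (μ/(1-μ))^keven) ≤ ε := by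
      rw [hεdef]; nlinarith [hvlo]
    have hεhi : ε ≤ (1-μ)^k * (μ/(1-μ))^kodd := by
      rw [hεdef]; nlinarith [hvhi]
    have hnn := w_nonneg (k := k) hμ0 hμ kodd keven hkoddmax hkevenmax hεlo hεhi
    refine ⟨nu k μ ε, ⟨nu_prob (by omega) hnn, nu_indep hk hnn⟩, ?_⟩
    rw [nu_singleton hnn, pf_false, hsf0]
    rw [hεdef]; ring
  refine ⟨hinj, ?_, ?_⟩
  · ext v
    constructor
    · rintro ⟨ν, ⟨hp, hind⟩, rfl⟩
      exact hsub ν hp hind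
    · intro hv
      obtain ⟨ν, hν, hval⟩ := hexists v hv
      exact ⟨ν, hν, hval⟩
  · intro v hv
    obtain ⟨ν, hν, hval⟩ := hexists v hv
    refine ⟨ν, ⟨hν, hval⟩, ?_⟩
    rintro ν' ⟨hν', hval'⟩
    exact hinj hν' hν (hval'.trans hval.symm)
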